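/- If a rational map R of degree d has all its d+1 fixed points simple (the fixed point polynomial zQ(z) - P(z) has d+1 distinct roots ζ₁,…,ζ_{d+1} in ℂ and R does not fix ∞), then the holomorphic indices ι(R, ζₖ) = 1/(1 - R'(ζₖ)) sum to 1: Σₖ 1/(1 - R'(ζₖ)) = 1. -/

import Mathlib

open Polynomial Finset

/-- Rational Fatou index formula: if all `d+1` fixed points of a degree-`d` rational map
`R = P/Q` are simple (the fixed point polynomial `zQ - P` has `d+1` distinct roots `ζₖ`),
then the holomorphic indices `1/(1 - R'(ζₖ))` sum to 1. -/
theorem fatou_index_formula (d : ℕ) (hd : 2 ≤ d) (P Q : Polynomial ℂ) (hQ : Q.Monic)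
    (hQd : Q.natDegree = d) (hPd : P.natDegree ≤ d) (hcop : IsCoprime P Q)
    (ζ : Fin (d + 1) → ℂ) (hζ : Function.Injective ζ)
    (hfix : X * Q - P = ∏ k, (X - C (ζ k)))
    (m : ℂ → ℂ)
    (hm : ∀ z : ℂ, m z =
      ((derivative P).eval z * Q.eval z - P.eval z * (derivative Q).eval z) / (Q.eval z) ^ 2) :
    ∑ k, 1 / (1 - m (ζ k)) = 1 := by
  classical
  have hFroot : ∀ k, (X * Q - P).eval (ζ k) = 0 := by
    intro k
    rw [hfix, eval_prod]
    exact Finset.prod_eq_zero (mem_univ k) (by simp)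
  have hfixeq : ∀ k, ζ k * Q.eval (ζ k) = P.eval (ζ k) := by
    intro k; have := hFroot k; simp only [eval_sub, eval_mul, eval_X] at this
    linear_combination this
  -- Q does not vanish at fixed points
  have hQne : ∀ k, Q.eval (ζ k) ≠ 0 := by
    intro k hk
    have hP0 : P.eval (ζ k) = 0 := by rw [← hfixeq k, hk, mul_zero]
    obtain ⟨a, b, hab⟩ := hcop
    have := congrArg (eval (ζ k)) hab
    simp [hP0, hk] at this
  -- derivative of F at ζ k
  set D : Fin (d + 1) → ℂ := fun k => ∏ j ∈ univ.erase k, (ζ k - ζ j) with hD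
  have hDval : ∀ k, (derivative (X * Q - P)).eval (ζ k) = D k := by
    intro k
    rw [hfix]
    have hnod : (∏ k : Fin (d+1), (X - C (ζ k))) = Lagrange.nodal univ ζ := rfl
    rw [hnod, Lagrange.eval_nodal_derivative_eval_node_eq (mem_univ k), Lagrange.eval_nodal]
  have hDne : ∀ k, D k ≠ 0 := by
    intro k
    refine Finset.prod_ne_zero_iff.2 fun j hj => ?_
    have : j ≠ k := (Finset.mem_erase.1 hj).1
    exact sub_ne_zero_of_ne fun h => this.symm (hζ h)
  -- key pointwise identity
  have hterm : ∀ k, 1 / (1 - m (ζ k)) = Q.eval (ζ k) / D k := by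
    intro k
    have hd2 : (derivative (X * Q - P)).eval (ζ k)
        = Q.eval (ζ k) + ζ k * (derivative Q).eval (ζ k) - (derivative P).eval (ζ k) := by
      simp [derivative_mul]
    have hD2 : D k = Q.eval (ζ k) + ζ k * (derivative Q).eval (ζ k) - (derivative P).eval (ζ k) := by
      rw [← hDval k, hd2]
    have hq := hQne k
    have hfe := hfixeq k
    have hdn := hDne k
    have h1 : 1 - m (ζ k) = D k / Q.eval (ζ k) := by
      rw [hm, hD2, eq_div_iff hq]
      field_simp
      ring_nf
      linear_combination (-eval (ζ k) (derivative Q)) * hfe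
    rw [h1, one_div_div]
  rw [Finset.sum_congr rfl fun k _ => hterm k]
  -- Lagrange interpolation argument
  set G : Polynomial ℂ := ∑ k, C (Q.eval (ζ k) / D k) * ∏ j ∈ univ.erase k, (X - C (ζ j)) with hG
  have hGeval : ∀ i, G.eval (ζ i) = Q.eval (ζ i) := by
    intro i
    rw [hG, eval_finset_sum]
    rw [Finset.sum_eq_single i]
    · rw [eval_mul, eval_C, eval_prod]
      simp only [eval_sub, eval_X, eval_C]
      rw [div_mul_cancel₀]
      exact hDne i
    · intro b _ hb
      rw [eval_mul, eval_prod]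
      refine mul_eq_zero_of_right _ (Finset.prod_eq_zero (Finset.mem_erase.2 ⟨Ne.symm hb, mem_univ i⟩) ?_)
      simp
    · simp
  have hmon : ∀ k : Fin (d+1), (∏ j ∈ univ.erase k, (X - C (ζ j))).Monic ∧
      (∏ j ∈ univ.erase k, (X - C (ζ j))).natDegree = d := by
    intro k
    constructor
    · exact monic_prod_of_monic _ _ fun j _ => monic_X_sub_C _
    · rw [Polynomial.natDegree_prod _ _ (fun j _ => X_sub_C_ne_zero _)]
      simp [Finset.card_erase_of_mem (mem_univ k)]
  have hGQ : G = Q := by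
    refine Polynomial.eq_of_degrees_lt_of_eval_index_eq (univ : Finset (Fin (d+1)))
      (Function.Injective.injOn hζ) ?_ ?_ (fun i _ => hGeval i)
    · rw [Finset.card_univ, Fintype.card_fin]
      refine lt_of_le_of_lt (Polynomial.degree_sum_le _ _) ?_
      rw [Finset.sup_lt_iff (by exact_mod_cast WithBot.bot_lt_coe (d+1))]
      intro k _
      refine lt_of_le_of_lt (Polynomial.degree_mul_le _ _) ?_
      have h1 : (C (Q.eval (ζ k) / D k)).degree ≤ 0 := degree_C_le
      have h2 : (∏ j ∈ univ.erase k, (X - C (ζ j))).degree = (d : WithBot ℕ) := by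
        rw [Polynomial.degree_eq_natDegree (hmon k).1.ne_zero, (hmon k).2]
      calc (C (Q.eval (ζ k) / D k)).degree + (∏ j ∈ univ.erase k, (X - C (ζ j))).degree
          ≤ 0 + (d : WithBot ℕ) := add_le_add h1 (le_of_eq h2)
        _ < ((d + 1 : ℕ) : WithBot ℕ) := by
            rw [zero_add]
            exact_mod_cast Nat.lt_succ_self d
    · rw [Finset.card_univ, Fintype.card_fin]
      refine lt_of_le_of_lt Polynomial.degree_le_natDegree ?_
      rw [hQd]; exact_mod_cast Nat.lt_succ_self d
  -- compare coefficient d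
  have hcoeff := congrArg (fun p => Polynomial.coeff p d) hGQ
  simp only [hG] at hcoeff
  rw [Polynomial.finset_sum_coeff] at hcoeff
  have hterm2 : ∀ k : Fin (d+1),
      (C (Q.eval (ζ k) / D k) * ∏ j ∈ univ.erase k, (X - C (ζ j))).coeff d
      = Q.eval (ζ k) / D k := by
    intro k
    rw [Polynomial.coeff_C_mul]
    have := (hmon k).1
    have hnd := (hmon k).2
    have h1 : (∏ j ∈ univ.erase k, (X - C (ζ j))).coeff d = 1 := by
      simpa [hnd] using this.coeff_natDegree
    rw [h1, mul_one]
  rw [Finset.sum_congr rfl fun k _ => hterm2 k] at hcoeff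
  rw [hcoeff, ← hQd]
  exact hQ.coeff_natDegree
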